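/- arXiv:0903.5361 — 2 statements merged into one kernel-verified Lean document; each statement's English description precedes it below -/
import Mathlib

section
/- Let 1 ≤ d < √3 and let Δ(d) be the intersection of the three closed unit balls in ℝ² centered at c₁ = (0,0), c₂ = (d,0), c₃ = (d/2, (√3/2)·d). Then the area of Δ(d) equals 3·arccos(d/2) + (√3/4)·d² − (3/4)·d·√(4 − d²) − π/2. -/
open Metric Real MeasureTheory
open scoped InnerProductSpace Pointwise ENNReal

noncomputable section

/-- The Euclidean plane. -/
abbrev E2 := EuclideanSpace ℝ (Fin 2)

/-- The point of the Euclidean plane with the given coordinates. -/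
def pt (a b : ℝ) : E2 := (EuclideanSpace.equiv (Fin 2) ℝ).symm ![a, b]

/-- The width of a set `C` in the direction of the unit vector `u`. -/
def dirWidth (C : Set E2) (u : E2) : ℝ :=
  sSup {w : ℝ | ∃ x ∈ C, ∃ y ∈ C, w = ⟪x - y, u⟫_ℝ}

/-- The minimal width of a set: the infimum of the directional widths over all
unit vectors. -/
def minWidth (C : Set E2) : ℝ :=
  sInf {w : ℝ | ∃ u : E2, ‖u‖ = 1 ∧ w = dirWidth C u}

/-- The inradius of a set. -/
def inradius (C : Set E2) : ℝ :=
  sSup {r : ℝ | 0 ≤ r ∧ ∃ c : E2, closedBall c r ⊆ C}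

/-- The circumradius of a set. -/
def circumradius (C : Set E2) : ℝ :=
  sInf {r : ℝ | 0 ≤ r ∧ ∃ c : E2, C ⊆ closedBall c r}

/-- The dual disk-polygon of a set `D`. -/
def dualDP (D : Set E2) : Set E2 := {y : E2 | ∀ x ∈ D, dist x y ≤ 1}
namespace ADT

open Set

lemma sq_le_iff_mem_Icc {c y : ℝ} (hc : 0 ≤ c) :
    y^2 ≤ c ↔ y ∈ Set.Icc (-Real.sqrt c) (Real.sqrt c) := by
  rw [Set.mem_Icc]
  have h1 := Real.sq_sqrt hc
  have h2 := Real.sqrt_nonneg c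
  constructor
  · intro h; constructor <;> nlinarith
  · rintro ⟨h3, h4⟩; nlinarith

lemma le_of_sq_le_sq {a b : ℝ} (ha : 0 ≤ a) (hb : 0 ≤ b) (h : a^2 ≤ b^2) : a ≤ b := by
  have := Real.sqrt_le_sqrt h
  rwa [Real.sqrt_sq ha, Real.sqrt_sq hb] at this

lemma sqrt_le_of_sq {A b : ℝ} (hb : 0 ≤ b) (h : A ≤ b^2) : Real.sqrt A ≤ b := by
  have := Real.sqrt_le_sqrt h
  rwa [Real.sqrt_sq hb] at this

lemma le_sqrt_of_sq {a B : ℝ} (ha : 0 ≤ a) (h : a^2 ≤ B) : a ≤ Real.sqrt B := by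
  have := Real.sqrt_le_sqrt h
  rwa [Real.sqrt_sq ha] at this

lemma sqrt_eq_of_sq {A b : ℝ} (hb : 0 ≤ b) (h : A = b^2) : Real.sqrt A = b := by
  rw [h, Real.sqrt_sq hb]

noncomputable def G (t : ℝ) : ℝ := (Real.arcsin t + t * Real.sqrt (1 - t^2)) / 2

lemma G_deriv {t : ℝ} (h1 : -1 < t) (h2 : t < 1) :
    HasDerivAt G (Real.sqrt (1 - t^2)) t := by
  have hpos : 0 < 1 - t^2 := by nlinarith
  have hs : (0:ℝ) < Real.sqrt (1 - t^2) := Real.sqrt_pos.mpr hpos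
  have hsq := Real.sq_sqrt hpos.le
  have d1 : HasDerivAt Real.arcsin (1 / Real.sqrt (1 - t^2)) t :=
    Real.hasDerivAt_arcsin (by linarith) (by linarith)
  have d2 : HasDerivAt (fun t : ℝ => 1 - t^2) (-(2*t)) t := by
    simpa using (hasDerivAt_pow 2 t).const_sub 1
  have d3 : HasDerivAt (fun t : ℝ => Real.sqrt (1 - t^2))
      (-(2*t) / (2 * Real.sqrt (1 - t^2))) t := d2.sqrt hpos.ne'
  have d4 : HasDerivAt (fun t : ℝ => t * Real.sqrt (1 - t^2))
      (1 * Real.sqrt (1 - t^2) + t * (-(2*t) / (2 * Real.sqrt (1 - t^2)))) t :=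
    (hasDerivAt_id t).mul d3
  have := (d1.add d4).div_const 2
  convert this using 1
  all_goals try rfl
  field_simp
  nlinarith [hsq]

lemma G_cont : Continuous G := by
  unfold G
  exact ((Real.continuous_arcsin.add (continuous_id.mul
    (((continuous_const.sub (continuous_pow 2))).sqrt))).div_const 2)

lemma G_neg (t : ℝ) : G (-t) = - G t := by
  unfold G
  rw [Real.arcsin_neg]
  ring_nf

lemma G_zero : G 0 = 0 := by simp [G]

lemma integral_sqrt_shift (a b c : ℝ) (hab : a ≤ b) (h1 : -1 ≤ a - c) (h2 : b - c ≤ 1) :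
    ∫ x in a..b, Real.sqrt (1 - (x - c)^2) = G (b - c) - G (a - c) := by
  have hcont : ContinuousOn (fun x => G (x - c)) (Icc a b) :=
    (G_cont.comp (continuous_id.sub continuous_const)).continuousOn
  have := intervalIntegral.integral_eq_sub_of_hasDeriv_right_of_le hab hcont
    (f' := fun x => Real.sqrt (1 - (x - c)^2)) ?_ ?_
  · exact this
  · intro x hx
    have hd : HasDerivAt (fun x : ℝ => G (x - c)) (Real.sqrt (1 - (x - c)^2) * 1) x :=
      (G_deriv (by cases hx; linarith) (by cases hx; linarith)).comp x
        ((hasDerivAt_id x).sub_const c)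
    simpa using hd.hasDerivWithinAt
  · apply Continuous.intervalIntegrable
    exact (continuous_const.sub (((continuous_id.sub continuous_const)).pow 2)).sqrt

lemma integral_sqrt0 (a b : ℝ) (hab : a ≤ b) (h1 : -1 ≤ a) (h2 : b ≤ 1) :
    ∫ x in a..b, Real.sqrt (1 - x^2) = G b - G a := by
  have := integral_sqrt_shift a b 0 hab (by linarith) (by linarith)
  simpa using this

lemma mono_sqrt' {a b : ℝ} (hab : a^2 ≤ b^2) : Real.sqrt (1 - b^2) ≤ Real.sqrt (1 - a^2) :=
  Real.sqrt_le_sqrt (by linarith)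

lemma d_sq_lt {d s : ℝ} (hd0 : 0 < d) (hs0 : 0 ≤ s) (h3 : s^2 = 3) (hd2 : d < s) : d^2 < 3 := by
  nlinarith

lemma d_lt_two {d : ℝ} (hd0 : 0 < d) (hd3 : d^2 < 3) : d < 2 := by nlinarith

lemma hA_aux {d s h : ℝ} (hd1 : 1 ≤ d) (hs0 : 0 ≤ s) (h3 : s^2 = 3) (hh0 : 0 ≤ h)
    (hhsq : h^2 = 1 - d^2/4) : 0 ≤ s*d/4 - h/2 := by
  have hd0 : (0:ℝ) < d := by linarith
  have h1 : h/2 ≤ s*d/4 := by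
    apply le_of_sq_le_sq (by linarith) (by nlinarith)
    nlinarith
  linarith

lemma d4_le_sh {d s h : ℝ} (hd0 : 0 < d) (hd3 : d^2 ≤ 3) (hs0 : 0 ≤ s) (h3 : s^2 = 3)
    (hh0 : 0 ≤ h) (hhsq : h^2 = 1 - d^2/4) : d/4 ≤ s/2 * h := by
  apply le_of_sq_le_sq (by linarith) (by nlinarith)
  nlinarith

lemma xR_le_one {d s h xR : ℝ} (hxR0 : 0 ≤ xR) (hid1 : 1 - xR^2 = (s*d/4 - h/2)^2) :
    xR ≤ 1 := by
  apply le_of_sq_le_sq hxR0 zero_le_one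
  nlinarith [sq_nonneg (s*d/4 - h/2)]

lemma sqrt_le_one_iff {A : ℝ} (hA : 0 ≤ A) : Real.sqrt A ≤ 1 ↔ A ≤ 1 := by
  constructor
  · intro hle; nlinarith [Real.sq_sqrt hA, Real.sqrt_nonneg A]
  · intro hle; exact sqrt_le_of_sq zero_le_one (by linarith)

lemma c1_aux {d x : ℝ} (hd1 : 1 ≤ d) (hm1 : d - 1 ≤ x) (hm2 : x ≤ 1) : 0 ≤ 1 - x^2 := by
  nlinarith

lemma c2_aux {d x : ℝ} (hd1 : 1 ≤ d) (hm1 : d - 1 ≤ x) (hm2 : x ≤ 1) : 0 ≤ 1 - (x-d)^2 := by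
  nlinarith

lemma c3_aux {d x : ℝ} (hd1 : 1 ≤ d) (hd4 : d ≤ 2) (hm1 : d - 1 ≤ x) (hm2 : x ≤ 1) :
    3/4 ≤ 1 - (x-d/2)^2 := by nlinarith

lemma hlow1_aux {d s x : ℝ} (hd1 : 1 ≤ d) (hs0 : 0 ≤ s) (h3 : s^2 = 3) (hm1 : d - 1 ≤ x)
    (hm2 : x ≤ 1) : Real.sqrt (1 - (x-d/2)^2) ≤ s*d/2 + Real.sqrt (1 - x^2) := by
  have hd0 : (0:ℝ) < d := by linarith
  have u1nn := Real.sqrt_nonneg (1 - x^2)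
  have u1sq := Real.sq_sqrt (c1_aux hd1 hm1 hm2)
  apply sqrt_le_of_sq (by nlinarith [mul_nonneg (mul_nonneg hs0 hd0.le) u1nn])
  nlinarith [mul_nonneg (mul_nonneg hs0 hd0.le) u1nn, sq_nonneg d, u1sq,
    mul_nonneg hd0.le (show (0:ℝ) ≤ d - x by linarith)]

lemma hlow2_aux {d s x : ℝ} (hd1 : 1 ≤ d) (hs0 : 0 ≤ s) (h3 : s^2 = 3) (hm1 : d - 1 ≤ x)
    (hm2 : x ≤ 1) : Real.sqrt (1 - (x-d/2)^2) ≤ s*d/2 + Real.sqrt (1 - (x-d)^2) := by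
  have hd0 : (0:ℝ) < d := by linarith
  have u2nn := Real.sqrt_nonneg (1 - (x-d)^2)
  have u2sq := Real.sq_sqrt (c2_aux hd1 hm1 hm2)
  apply sqrt_le_of_sq (by nlinarith [mul_nonneg (mul_nonneg hs0 hd0.le) u2nn])
  nlinarith [mul_nonneg (mul_nonneg hs0 hd0.le) u2nn, sq_nonneg d, u2sq,
    mul_nonneg hd0.le (show (0:ℝ) ≤ x by linarith)]

lemma hup_aux {d s x : ℝ} (hd1 : 1 ≤ d) (hs0 : 0 ≤ s) (h3 : s^2 = 3) (hm1 : d - 1 ≤ x)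
    (hm2 : x ≤ 1) (hd4 : d ≤ 2) :
    Real.sqrt (1 - x^2) ≤ s*d/2 + Real.sqrt (1 - (x-d/2)^2) := by
  have hu1 : Real.sqrt (1 - x^2) ≤ 1 :=
    (sqrt_le_one_iff (c1_aux hd1 hm1 hm2)).2 (by nlinarith [sq_nonneg x])
  have hu3 : s/2 ≤ Real.sqrt (1 - (x-d/2)^2) := by
    apply le_sqrt_of_sq (by linarith)
    nlinarith [c3_aux hd1 hd4 hm1 hm2]
  have hs1 : 1 ≤ s := by nlinarith
  have hsd : s ≤ s*d := by nlinarith [mul_nonneg hs0 (show (0:ℝ) ≤ d-1 by linarith)]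
  linarith

lemma min_ord1 {d x : ℝ} (hd0 : 0 < d) (hx : d/2 ≤ x) : 1 - x^2 ≤ 1 - (x-d)^2 := by
  nlinarith [mul_nonneg hd0.le (show (0:ℝ) ≤ 2*x - d by linarith)]

lemma min_ord2 {d x : ℝ} (hd0 : 0 < d) (hx : x ≤ d/2) : 1 - (x-d)^2 ≤ 1 - x^2 := by
  nlinarith [mul_nonneg hd0.le (show (0:ℝ) ≤ d - 2*x by linarith)]

lemma empty1 {x y : ℝ} (hm : 1 < x) (h1 : x^2 + y^2 ≤ 1) : False := by nlinarith [sq_nonneg y]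

lemma empty2 {d x y : ℝ} (hm : x < d - 1) (h2 : (x-d)^2 + y^2 ≤ 1) : False := by
  nlinarith [sq_nonneg y]


end ADT


set_option maxHeartbeats 4000000 in
/-- The area of the regular disk-triangle `Δ(d)` equals
`3·arccos(d/2) + (√3/4)d² - (3/4)d√(4 - d²) - π/2`. -/
theorem area_disk_triangle (d : ℝ) (hd1 : 1 ≤ d) (hd2 : d < Real.sqrt 3) :
    volume (closedBall (pt 0 0) 1 ∩ closedBall (pt d 0) 1
        ∩ closedBall (pt (d / 2) (Real.sqrt 3 / 2 * d)) 1)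
      = ENNReal.ofReal (3 * Real.arccos (d / 2) + Real.sqrt 3 / 4 * d ^ 2
          - 3 / 4 * d * Real.sqrt (4 - d ^ 2) - π / 2) := by
  obtain ⟨s, hs_def⟩ : ∃ s : ℝ, s = Real.sqrt 3 := ⟨_, rfl⟩
  rw [← hs_def]
  have hs0 : 0 ≤ s := hs_def ▸ Real.sqrt_nonneg 3
  have h3 : s^2 = 3 := by rw [hs_def]; exact Real.sq_sqrt (by norm_num)
  have hd0 : (0:ℝ) < d := lt_of_lt_of_le one_pos hd1
  have hd3 : d^2 < 3 := ADT.d_sq_lt hd0 hs0 h3 (hs_def ▸ hd2)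
  have hdlt2 : d < 2 := ADT.d_lt_two hd0 hd3
  obtain ⟨k, hk_def⟩ : ∃ k : ℝ, k = s / 2 * d := ⟨_, rfl⟩
  rw [← hk_def]
  have hk' : k = s * d / 2 := by rw [hk_def]; ring
  obtain ⟨h, hh_def⟩ : ∃ h : ℝ, h = Real.sqrt (1 - d^2/4) := ⟨_, rfl⟩
  have hh0 : 0 ≤ h := hh_def ▸ Real.sqrt_nonneg _
  have hhsq : h^2 = 1 - d^2/4 := by
    rw [hh_def]; exact Real.sq_sqrt (by linarith)
  have hsd0 : 0 ≤ s * d := mul_nonneg hs0 hd0.le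
  have hsh0 : 0 ≤ s * h := mul_nonneg hs0 hh0
  obtain ⟨xR, hxR_def⟩ : ∃ xR : ℝ, xR = d/4 + s/2 * h := ⟨_, rfl⟩
  obtain ⟨xL, hxL_def⟩ : ∃ xL : ℝ, xL = d - xR := ⟨_, rfl⟩
  -- basic value identities
  have hid1 : 1 - xR^2 = (s*d/4 - h/2)^2 := by
    rw [hxR_def]
    linear_combination (-h^2/4 - d^2/16) * h3 - hhsq
  have hid3 : 1 - (xR - d/2)^2 = (s*d/4 + h/2)^2 := by
    rw [hxR_def]
    linear_combination (-h^2/4 - d^2/16) * h3 - hhsq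
  have hA : 0 ≤ s*d/4 - h/2 := ADT.hA_aux hd1 hs0 h3 hh0 hhsq
  have hB : 0 ≤ s*d/4 + h/2 := by linarith
  have hval1 : Real.sqrt (1 - xR^2) = s*d/4 - h/2 := ADT.sqrt_eq_of_sq hA hid1
  have hval3 : Real.sqrt (1 - (xR - d/2)^2) = s*d/4 + h/2 := ADT.sqrt_eq_of_sq hB hid3
  have hvald2 : Real.sqrt (1 - (d/2)^2) = h := ADT.sqrt_eq_of_sq hh0 (by linear_combination -hhsq)
  have hxR0 : 0 ≤ xR := by rw [hxR_def]; linarith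
  have hxR1 : xR ≤ 1 := ADT.xR_le_one hxR0 hid1
  have hrd2 : d/2 ≤ xR := by
    have := ADT.d4_le_sh hd0 hd3.le hs0 h3 hh0 hhsq
    rw [hxR_def]; linarith
  have hxLge : d - 1 ≤ xL := by rw [hxL_def]; linarith
  have hxLd2 : xL ≤ d/2 := by rw [hxL_def]; linarith
  have hxLxR : xL ≤ xR := le_trans hxLd2 hrd2
  have hxL0 : 0 ≤ xL := by linarith
  have hxLR : xL = d - xR := hxL_def
  -- the planar set
  obtain ⟨T, hT_def⟩ : ∃ T : Set (ℝ × ℝ), T = {p : ℝ × ℝ | p.1^2 + p.2^2 ≤ 1} ∩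
      {p : ℝ × ℝ | (p.1 - d)^2 + p.2^2 ≤ 1} ∩
      {p : ℝ × ℝ | (p.1 - d/2)^2 + (p.2 - k)^2 ≤ 1} := ⟨_, rfl⟩
  have hT : MeasurableSet T := by
    rw [hT_def]
    refine (MeasurableSet.inter (MeasurableSet.inter ?_ ?_) ?_) <;>
      exact measurableSet_le (by fun_prop) (by fun_prop)
  -- membership in closed balls
  have mem_ball : ∀ (a b : ℝ) (p : E2),
      p ∈ Metric.closedBall (pt a b) 1 ↔ (p 0 - a)^2 + (p 1 - b)^2 ≤ 1 := by
    intro a b p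
    have e0 : (pt a b) 0 = a := rfl
    have e1 : (pt a b) 1 = b := rfl
    rw [Metric.mem_closedBall, EuclideanSpace.dist_eq, Fin.sum_univ_two, e0, e1,
      Real.dist_eq, Real.dist_eq, sq_abs, sq_abs]
    exact ADT.sqrt_le_one_iff (by positivity)
  -- transfer to ℝ × ℝ
  have mp : MeasurePreserving (fun p : E2 => ((p 0, p 1) : ℝ × ℝ)) volume volume :=
    (MeasureTheory.volume_preserving_finTwoArrow ℝ).comp
      (PiLp.volume_preserving_ofLp (Fin 2))
  have hSeq : closedBall (pt 0 0) 1 ∩ closedBall (pt d 0) 1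
      ∩ closedBall (pt (d / 2) k) 1 = (fun p : E2 => ((p 0, p 1) : ℝ × ℝ)) ⁻¹' T := by
    ext p
    simp only [Set.mem_inter_iff, Set.mem_preimage, hT_def, Set.mem_setOf_eq,
      mem_ball 0 0 p, mem_ball d 0 p, mem_ball (d/2) k p]
    constructor
    · rintro ⟨⟨a1, a2⟩, a3⟩
      refine ⟨⟨by linarith, by linarith⟩, by linarith⟩
    · rintro ⟨⟨a1, a2⟩, a3⟩
      refine ⟨⟨by linarith, by linarith⟩, by linarith⟩
  -- slice description
  have slice_eq : ∀ x ∈ Set.Icc (d-1) 1, Prod.mk x ⁻¹' T =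
      Set.Icc (-(Real.sqrt (1 - x^2))) (Real.sqrt (1 - x^2)) ∩
      Set.Icc (-(Real.sqrt (1 - (x-d)^2))) (Real.sqrt (1 - (x-d)^2)) ∩
      Set.Icc (k - Real.sqrt (1 - (x-d/2)^2)) (k + Real.sqrt (1 - (x-d/2)^2)) := by
    intro x hx
    rw [Set.mem_Icc] at hx
    have c1 : (0:ℝ) ≤ 1 - x^2 := ADT.c1_aux hd1 hx.1 hx.2
    have c2 : (0:ℝ) ≤ 1 - (x-d)^2 := ADT.c2_aux hd1 hx.1 hx.2
    have c3 : (0:ℝ) ≤ 1 - (x-d/2)^2 := by linarith [ADT.c3_aux hd1 hdlt2.le hx.1 hx.2]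
    ext y
    simp only [hT_def, Set.mem_preimage, Set.mem_inter_iff, Set.mem_setOf_eq, Set.mem_Icc]
    constructor
    · rintro ⟨⟨p1, p2⟩, p3⟩
      have q1 := (ADT.sq_le_iff_mem_Icc c1).1 (by linarith : y^2 ≤ 1 - x^2)
      have q2 := (ADT.sq_le_iff_mem_Icc c2).1 (by linarith : y^2 ≤ 1 - (x-d)^2)
      have q3 := (ADT.sq_le_iff_mem_Icc c3).1 (by linarith : (y-k)^2 ≤ 1 - (x-d/2)^2)
      rw [Set.mem_Icc] at q1 q2 q3
      exact ⟨⟨⟨q1.1, q1.2⟩, q2.1, q2.2⟩, by linarith [q3.1], by linarith [q3.2]⟩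
    · rintro ⟨⟨⟨a1, a2⟩, b1, b2⟩, e1, e2⟩
      have q1 := (ADT.sq_le_iff_mem_Icc c1).2 (Set.mem_Icc.2 ⟨a1, a2⟩)
      have q2 := (ADT.sq_le_iff_mem_Icc c2).2 (Set.mem_Icc.2 ⟨b1, b2⟩)
      have q3 := (ADT.sq_le_iff_mem_Icc c3).2
        (Set.mem_Icc.2 ⟨by linarith, by linarith⟩ : y - k ∈ _)
      exact ⟨⟨by linarith, by linarith⟩, by linarith⟩
  -- the slice-length function
  obtain ⟨L, hL_def⟩ : ∃ L : ℝ → ℝ, L = fun x => min (Real.sqrt (1 - x^2))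
      (Real.sqrt (1 - (x-d)^2)) + Real.sqrt (1 - (x-d/2)^2) - k := ⟨_, rfl⟩
  -- key: slice volumes
  have key : ∀ x : ℝ, volume (Prod.mk x ⁻¹' T) =
      Set.indicator (Set.Icc xL xR) (fun x => ENNReal.ofReal (L x)) x := by
    intro x
    by_cases hmem : x ∈ Set.Icc (d-1) 1
    · obtain ⟨hm1, hm2⟩ := Set.mem_Icc.1 hmem
      have hx0 : 0 ≤ x := by linarith
      rw [slice_eq x hmem, Set.Icc_inter_Icc, Set.Icc_inter_Icc, Real.volume_Icc]
      have hlow : -Real.sqrt (1 - x^2) ⊔ -Real.sqrt (1 - (x-d)^2)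
          ⊔ (k - Real.sqrt (1 - (x-d/2)^2)) = k - Real.sqrt (1 - (x-d/2)^2) := by
        rw [sup_eq_right]
        apply sup_le
        · linarith [ADT.hlow1_aux hd1 hs0 h3 hm1 hm2, hk']
        · linarith [ADT.hlow2_aux hd1 hs0 h3 hm1 hm2, hk']
      have hup : Real.sqrt (1 - x^2) ⊓ Real.sqrt (1 - (x-d)^2)
          ⊓ (k + Real.sqrt (1 - (x-d/2)^2)) = Real.sqrt (1 - x^2) ⊓ Real.sqrt (1 - (x-d)^2) := by
        rw [inf_eq_left]
        exact le_trans inf_le_left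
          (by linarith [ADT.hup_aux hd1 hs0 h3 hm1 hm2 hdlt2.le, hk'])
      rw [hlow, hup]
      by_cases hx' : x ∈ Set.Icc xL xR
      · rw [Set.indicator_of_mem hx']
        congr 1
        rw [hL_def]
        ring
      · rw [Set.indicator_of_notMem hx']
        rw [ENNReal.ofReal_eq_zero]
        rw [Set.mem_Icc, not_and_or, not_le, not_le] at hx'
        have hbound : Real.sqrt (1 - x^2) ⊓ Real.sqrt (1 - (x-d)^2)
            + Real.sqrt (1 - (x-d/2)^2) ≤ k := by
          rcases hx' with hx' | hx'
          · -- x < xL : use u2 and u3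
            have b2 : Real.sqrt (1 - (x-d)^2) ≤ s*d/4 - h/2 := by
              rw [show (x-d)^2 = (d-x)^2 by ring, ← hval1]
              exact ADT.mono_sqrt' (sq_le_sq' (by linarith) (by linarith))
            have b3 : Real.sqrt (1 - (x-d/2)^2) ≤ s*d/4 + h/2 := by
              rw [show (x-d/2)^2 = (d/2-x)^2 by ring, ← hval3]
              exact ADT.mono_sqrt' (sq_le_sq' (by linarith) (by linarith))
            have hmle := inf_le_right (a := Real.sqrt (1 - x^2)) (b := Real.sqrt (1 - (x-d)^2))
            rw [hk']
            linarith
          · -- xR < x : use u1 and u3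
            have b1 : Real.sqrt (1 - x^2) ≤ s*d/4 - h/2 := by
              rw [← hval1]
              exact ADT.mono_sqrt' (sq_le_sq' (by linarith) (by linarith))
            have b3 : Real.sqrt (1 - (x-d/2)^2) ≤ s*d/4 + h/2 := by
              rw [← hval3]
              exact ADT.mono_sqrt' (sq_le_sq' (by linarith) (by linarith))
            have hmle := inf_le_left (a := Real.sqrt (1 - x^2)) (b := Real.sqrt (1 - (x-d)^2))
            rw [hk']
            linarith
        linarith [hbound]
    · -- x outside [d-1, 1] : slice empty
      have hempty : Prod.mk x ⁻¹' T = ∅ := by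
        ext y
        simp only [hT_def, Set.mem_preimage, Set.mem_inter_iff, Set.mem_setOf_eq,
          Set.mem_empty_iff_false, iff_false]
        rw [Set.mem_Icc, not_and_or, not_le, not_le] at hmem
        rintro ⟨⟨p1, p2⟩, p3⟩
        rcases hmem with hm | hm
        · exact ADT.empty2 hm p2
        · exact ADT.empty1 hm p1
      rw [hempty, measure_empty, Set.indicator_of_notMem]
      rw [Set.mem_Icc, not_and_or, not_le, not_le] at hmem
      rw [Set.mem_Icc, not_and_or]
      rcases hmem with hm | hm
      · left; push_neg; linarith
      · right; push_neg; linarith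
  -- pointwise nonnegativity on [xL, xR]
  have hnonneg : ∀ x ∈ Set.Icc xL xR, 0 ≤ L x := by
    intro x hx
    rw [Set.mem_Icc] at hx
    have b1 : s*d/4 - h/2 ≤ Real.sqrt (1 - x^2) := by
      rw [← hval1]
      exact ADT.mono_sqrt' (sq_le_sq' (by linarith [hx.1]) hx.2)
    have b2 : s*d/4 - h/2 ≤ Real.sqrt (1 - (x-d)^2) := by
      rw [← hval1, show (x-d)^2 = (d-x)^2 by ring]
      exact ADT.mono_sqrt' (sq_le_sq' (by linarith [hx.2, hxR1, hd1]) (by linarith [hx.1]))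
    have b3 : s*d/4 + h/2 ≤ Real.sqrt (1 - (x-d/2)^2) := by
      rw [← hval3]
      exact ADT.mono_sqrt' (sq_le_sq' (by linarith [hx.1]) (by linarith [hx.2]))
    rw [hL_def]
    simp only
    have hmm := le_min b1 b2
    rw [hk'] at *
    linarith
  -- continuity and integrability
  have c1 : Continuous fun x : ℝ => Real.sqrt (1 - x^2) :=
    (continuous_const.sub (continuous_pow 2)).sqrt
  have c2 : Continuous fun x : ℝ => Real.sqrt (1 - (x-d)^2) :=
    (continuous_const.sub ((continuous_id.sub continuous_const).pow 2)).sqrt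
  have c3 : Continuous fun x : ℝ => Real.sqrt (1 - (x-d/2)^2) :=
    (continuous_const.sub ((continuous_id.sub continuous_const).pow 2)).sqrt
  have hLcont : Continuous L := by
    rw [hL_def]
    exact ((c1.min c2).add c3).sub continuous_const
  -- evaluate two interval integrals
  have hIright : ∫ x in (d/2)..xR, L x = (ADT.G xR - ADT.G (d/2)) + ADT.G (xR - d/2)
      - (xR - d/2) * k := by
    have heq : Set.EqOn L (fun x => Real.sqrt (1 - x^2) + Real.sqrt (1 - (x-d/2)^2) - k)
        (Set.uIcc (d/2) xR) := by
      intro x hx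
      rw [Set.uIcc_of_le hrd2, Set.mem_Icc] at hx
      rw [hL_def]
      simp only
      rw [min_eq_left (Real.sqrt_le_sqrt (ADT.min_ord1 hd0 hx.1))]
    rw [intervalIntegral.integral_congr heq,
      intervalIntegral.integral_sub (f := fun x => Real.sqrt (1 - x^2) + Real.sqrt (1 - (x-d/2)^2)) ((c1.add c3).intervalIntegrable _ _)
        (intervalIntegrable_const),
      intervalIntegral.integral_add (c1.intervalIntegrable _ _) (c3.intervalIntegrable _ _),
      intervalIntegral.integral_const,
      ADT.integral_sqrt0 (d/2) xR hrd2 (by linarith) hxR1,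
      ADT.integral_sqrt_shift (d/2) xR (d/2) hrd2 (by linarith) (by linarith)]
    rw [show d/2 - d/2 = (0:ℝ) by ring, ADT.G_zero, smul_eq_mul]
    ring
  have hIleft : ∫ x in xL..(d/2), L x = (ADT.G xR - ADT.G (d/2)) + ADT.G (xR - d/2)
      - (xR - d/2) * k := by
    have heq : Set.EqOn L (fun x => Real.sqrt (1 - (x-d)^2) + Real.sqrt (1 - (x-d/2)^2) - k)
        (Set.uIcc xL (d/2)) := by
      intro x hx
      rw [Set.uIcc_of_le hxLd2, Set.mem_Icc] at hx
      rw [hL_def]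
      simp only
      rw [min_eq_right (Real.sqrt_le_sqrt (ADT.min_ord2 hd0 hx.2))]
    rw [intervalIntegral.integral_congr heq,
      intervalIntegral.integral_sub (f := fun x => Real.sqrt (1 - (x-d)^2) + Real.sqrt (1 - (x-d/2)^2)) ((c2.add c3).intervalIntegrable _ _)
        (intervalIntegrable_const),
      intervalIntegral.integral_add (c2.intervalIntegrable _ _) (c3.intervalIntegrable _ _),
      intervalIntegral.integral_const,
      ADT.integral_sqrt_shift xL (d/2) d hxLd2 (by rw [hxL_def]; linarith) (by linarith),
      ADT.integral_sqrt_shift xL (d/2) (d/2) hxLd2 (by rw [hxL_def]; linarith) (by linarith)]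
    rw [show xL - d = -xR by rw [hxL_def]; ring, show d/2 - d = -(d/2) by ring,
      show xL - d/2 = -(xR - d/2) by rw [hxL_def]; ring,
      show d/2 - d/2 = (0:ℝ) by ring,
      ADT.G_neg, ADT.G_neg, ADT.G_neg, ADT.G_zero, smul_eq_mul,
      show d/2 - xL = xR - d/2 by rw [hxL_def]; ring]
    ring
  -- arcsin values
  have hd2le1 : d/2 ≤ 1 := by linarith
  have hd2gem1 : (-1:ℝ) ≤ d/2 := by linarith
  have hcos : Real.cos (Real.arccos (d/2)) = d/2 := Real.cos_arccos hd2gem1 hd2le1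
  have hsin : Real.sin (Real.arccos (d/2)) = h := by
    rw [Real.sin_arccos]
    exact hvald2
  have harcsin_half : Real.arcsin (1/2) = π/6 := by
    rw [show (1:ℝ)/2 = Real.sin (π/6) by rw [Real.sin_pi_div_six],
      Real.arcsin_sin (by linarith [Real.pi_pos]) (by linarith [Real.pi_pos])]
  have hα0 : 0 ≤ Real.arccos (d/2) := Real.arccos_nonneg _
  have hαle : Real.arccos (d/2) ≤ π/3 := by
    have h1 : π/6 ≤ Real.arcsin (d/2) := by
      rw [← harcsin_half]
      exact Real.monotone_arcsin (by linarith)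
    have h2 : Real.arccos (d/2) = π/2 - Real.arcsin (d/2) :=
      Real.arccos_eq_pi_div_two_sub_arcsin _
    linarith
  have harcsind2 : Real.arcsin (d/2) = π/2 - Real.arccos (d/2) := by
    have := Real.arccos_eq_pi_div_two_sub_arcsin (d/2)
    linarith
  have harcsinxR : Real.arcsin xR = Real.arccos (d/2) + π/6 := by
    have hsum : Real.sin (Real.arccos (d/2) + π/6) = xR := by
      rw [Real.sin_add, hsin, hcos, Real.cos_pi_div_six, Real.sin_pi_div_six, hxR_def, hs_def]
      ring
    rw [← hsum, Real.arcsin_sin (by linarith [Real.pi_pos]) (by linarith [Real.pi_pos])]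
  have harcsinr : Real.arcsin (xR - d/2) = Real.arccos (d/2) - π/6 := by
    have hsum : Real.sin (Real.arccos (d/2) - π/6) = xR - d/2 := by
      rw [Real.sin_sub, hsin, hcos, Real.cos_pi_div_six, Real.sin_pi_div_six, hxR_def, hs_def]
      ring
    rw [← hsum, Real.arcsin_sin (by linarith [Real.pi_pos]) (by linarith [Real.pi_pos])]
  -- the main real integral
  have Jval : ∫ x in Set.Icc xL xR, L x = 3 * Real.arccos (d / 2) + s / 4 * d ^ 2
      - 3 / 4 * d * (2 * h) - π / 2 := by
    rw [MeasureTheory.integral_Icc_eq_integral_Ioc, ← intervalIntegral.integral_of_le hxLxR,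
      ← intervalIntegral.integral_add_adjacent_intervals
        (hLcont.intervalIntegrable xL (d/2)) (hLcont.intervalIntegrable (d/2) xR),
      hIleft, hIright]
    simp only [ADT.G]
    rw [hval1, hval3, hvald2, harcsinxR, harcsinr, harcsind2, hk']
    rw [hxR_def]
    linear_combination (-(d*h)/4) * h3
  -- assemble
  have h2h : Real.sqrt (4 - d ^ 2) = 2 * h := ADT.sqrt_eq_of_sq (by linarith)
    (by linear_combination -4*hhsq)
  rw [h2h, hSeq, mp.measure_preimage hT.nullMeasurableSet]
  rw [Measure.volume_eq_prod, Measure.prod_apply hT]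
  calc ∫⁻ x, volume (Prod.mk x ⁻¹' T) ∂volume
      = ∫⁻ x, Set.indicator (Set.Icc xL xR) (fun x => ENNReal.ofReal (L x)) x ∂volume :=
        lintegral_congr key
    _ = ∫⁻ x in Set.Icc xL xR, ENNReal.ofReal (L x) ∂volume := by
        rw [lintegral_indicator measurableSet_Icc]
    _ = ENNReal.ofReal (∫ x in Set.Icc xL xR, L x) := by
        rw [← MeasureTheory.ofReal_integral_eq_lintegral_ofReal
          (hLcont.integrableOn_Icc) ?_]
        filter_upwards [ae_restrict_mem measurableSet_Icc] with x hx
        exact hnonneg x hx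
    _ = ENNReal.ofReal (3 * Real.arccos (d / 2) + s / 4 * d ^ 2
          - 3 / 4 * d * (2 * h) - π / 2) := by rw [Jval]
end
end

section
/- Let 0 < d < 1 and let R_d be the Reuleaux triangle of width d given as the intersection of the three closed balls of radius d in ℝ² centered at v₁ = (0,0), v₂ = (d,0), v₃ = (d/2, (√3/2)·d). Then the outer parallel domain R_d + closedBall(0, 1−d) is a convex domain of constant width 2 − d: for every unit vector u, sup{⟪x − y, u⟫ : x, y ∈ R_d + closedBall(0, 1−d)} = 2 − d. -/
open Metric Real MeasureTheory
open scoped InnerProductSpace Pointwise ENNReal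

noncomputable section

/- ### Auxiliary lemmas -/

lemma keyV1 (d s a b z0 z1 : ℝ) (hd : 0 < d) (hs : s^2 = 3) (hs1 : 1 ≤ s)
    (hu : a^2 + b^2 = 1) (hc1 : 1/2 ≤ a) (hc2 : 1 ≤ a + s*b)
    (h2 : (z0 - d)^2 + z1^2 ≤ d^2) (h3 : (z0 - d/2)^2 + (z1 - s/2*d)^2 ≤ d^2) :
    0 ≤ z0*a + z1*b := by
  have hs0 : (0:ℝ) < s := by linarith
  have ha1 : a ≤ 1 := by nlinarith [sq_nonneg b]
  have hb : 0 ≤ b := by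
    by_contra h
    push_neg at h
    have : s*b < 0 := mul_neg_of_pos_of_neg hs0 h
    linarith
  have key4 : (a + s*b)^2 + (s*a - b)^2 = 4 := by linear_combination hs + (s^2+1)*hu
  have hub : a + s*b ≤ 2 := by nlinarith [sq_nonneg (s*a - b)]
  have hsa : 0 ≤ s*a - b := by nlinarith
  have hsab : 0 ≤ s*a + b := by linarith
  have hA : z0^2 + z1^2 ≤ 2*d*z0 := by nlinarith [h2]
  have hB : z0^2 + z1^2 ≤ d*z0 + s*d*z1 := by nlinarith [h3, hs]
  nlinarith [mul_nonneg hsa (sub_nonneg.2 hA), mul_nonneg hb (sub_nonneg.2 hB),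
    mul_nonneg hsab (add_nonneg (sq_nonneg z0) (sq_nonneg z1)), mul_pos hs0 hd]

lemma keyV2 (d s a b z0 z1 : ℝ) (hd : 0 < d) (hs : s^2 = 3) (hs1 : 1 ≤ s)
    (hu : a^2 + b^2 = 1) (hc1 : 1/2 ≤ -a) (hc2 : 1 ≤ -a + s*b)
    (h2 : z0^2 + z1^2 ≤ d^2) (h3 : (z0 - d/2)^2 + (z1 - s/2*d)^2 ≤ d^2) :
    0 ≤ (z0 - d)*a + z1*b := by
  have := keyV1 d s (-a) b (d - z0) z1 hd hs hs1 (by linarith [hu, sq_nonneg a]) hc1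
    (by linarith) (by nlinarith [h2]) (by nlinarith [h3])
  nlinarith [this]

lemma keyV3 (d s a b z0 z1 : ℝ) (hd : 0 < d) (hs : s^2 = 3) (hs1 : 1 ≤ s)
    (hu : a^2 + b^2 = 1) (hc1 : 1 ≤ -a - s*b) (hc2 : 1 ≤ a - s*b)
    (h2 : z0^2 + z1^2 ≤ d^2) (h3 : (z0 - d)^2 + z1^2 ≤ d^2) :
    0 ≤ (z0 - d/2)*a + (z1 - s/2*d)*b := by
  have hs0 : (0:ℝ) < s := by linarith
  have hb : b ≤ 0 := by
    by_contra h
    push_neg at h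
    have : 0 < s*b := mul_pos hs0 h
    linarith
  have key4 : (a - s*b)^2 + (s*a + b)^2 = 4 := by linear_combination hs + (s^2+1)*hu
  have key4' : (-a - s*b)^2 + (s*a - b)^2 = 4 := by linear_combination hs + (s^2+1)*hu
  have hx2 : a - s*b ≤ 2 := by nlinarith [sq_nonneg (s*a + b)]
  have hy2 : -a - s*b ≤ 2 := by nlinarith [sq_nonneg (s*a - b)]
  have hsa : 0 ≤ s*a - b := by nlinarith
  have hnsa : 0 ≤ -(s*a) - b := by nlinarith
  have hd2eq : d^2*(1+s^2) = 4*d^2 := by linear_combination d^2*hs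
  have hA : (z0-d/2)^2 + (z1-s/2*d)^2 ≤ -(d*(z0-d/2)) - s*d*(z1-s/2*d) := by
    linarith [h2, hd2eq]
  have hB : (z0-d/2)^2 + (z1-s/2*d)^2 ≤ d*(z0-d/2) - s*d*(z1-s/2*d) := by
    linarith [h3, hd2eq]
  generalize hg0 : z0 - d/2 = w0 at hA hB ⊢
  generalize hg1 : z1 - s/2*d = w1 at hA hB ⊢
  nlinarith [mul_nonneg hnsa (sub_nonneg.2 hA), mul_nonneg hsa (sub_nonneg.2 hB),
    mul_nonneg (neg_nonneg.2 hb) (add_nonneg (sq_nonneg w0) (sq_nonneg w1)), mul_pos hs0 hd]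

lemma cases_lemma (s a b : ℝ) (hs : s^2 = 3) (hs1 : 1 ≤ s) (hu : a^2 + b^2 = 1) :
    (1/2 ≤ a ∧ 1 ≤ a + s*b) ∨ (1/2 ≤ -a ∧ 1 ≤ -a + s*b) ∨ (1 ≤ -a - s*b ∧ 1 ≤ a - s*b)
    ∨ (1/2 ≤ -a ∧ 1 ≤ -a - s*b) ∨ (1/2 ≤ a ∧ 1 ≤ a - s*b) ∨ (1 ≤ a + s*b ∧ 1 ≤ -a + s*b) := by
  have hs0 : (0:ℝ) < s := by linarith
  rcases le_total 0 b with hb | hb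
  · have hsb : 0 ≤ s*b := mul_nonneg hs0.le hb
    rcases le_total (1/2 : ℝ) a with ha | ha
    · exact Or.inl ⟨ha, by nlinarith [sq_nonneg (s*b - 1 + a)]⟩
    · rcases le_total a (-(1/2) : ℝ) with ha' | ha'
      · exact Or.inr (Or.inl ⟨by linarith, by nlinarith [sq_nonneg (s*b - 1 - a)]⟩)
      · refine Or.inr (Or.inr (Or.inr (Or.inr (Or.inr ⟨?_, ?_⟩)))) <;>
          nlinarith [sq_nonneg (s*b - 3/2)]
  · have hsb : s*b ≤ 0 := mul_nonpos_of_nonneg_of_nonpos hs0.le hb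
    rcases le_total (1/2 : ℝ) a with ha | ha
    · exact Or.inr (Or.inr (Or.inr (Or.inr (Or.inl
        ⟨ha, by nlinarith [sq_nonneg (s*b + 1 - a)]⟩))))
    · rcases le_total a (-(1/2) : ℝ) with ha' | ha'
      · exact Or.inr (Or.inr (Or.inr (Or.inl ⟨by linarith, by nlinarith [sq_nonneg (s*b + 1 + a)]⟩)))
      · refine Or.inr (Or.inr (Or.inl ⟨?_, ?_⟩)) <;> nlinarith [sq_nonneg (s*b + 3/2)]

lemma pt_apply_zero (a b : ℝ) : pt a b 0 = a := rfl
lemma pt_apply_one (a b : ℝ) : pt a b 1 = b := rfl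

lemma mem_cb {z c : E2} {r : ℝ} (hr : 0 ≤ r) :
    z ∈ closedBall c r ↔ (z 0 - c 0)^2 + (z 1 - c 1)^2 ≤ r^2 := by
  rw [mem_closedBall, EuclideanSpace.dist_eq, Fin.sum_univ_two]
  rw [show dist (z 0) (c 0) = |z 0 - c 0| from rfl, show dist (z 1) (c 1) = |z 1 - c 1| from rfl,
    sq_abs, sq_abs, Real.sqrt_le_left]
  exact hr

lemma inner_coords (x y : E2) : ⟪x, y⟫_ℝ = x 0 * y 0 + x 1 * y 1 := by
  simp [PiLp.inner_apply, Fin.sum_univ_two, RCLike.inner_apply, mul_comm]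

lemma norm_le_of_mem_cb {p : E2} {r : ℝ} (hp : p ∈ closedBall (0:E2) r) : ‖p‖ ≤ r := by
  simpa [dist_zero_right] using mem_closedBall.1 hp

lemma unit_coords {u : E2} (hu : ‖u‖ = 1) : (u 0)^2 + (u 1)^2 = 1 := by
  have h : ⟪u, u⟫_ℝ = 1 := by rw [real_inner_self_eq_norm_sq, hu]; norm_num
  rw [inner_coords] at h
  nlinarith [h]

lemma good_vertex (d : ℝ) (hd2 : d < 1) (u : E2) (hu : ‖u‖ = 1)
    (R : Set E2) (v : E2) (hv : v ∈ R) (hvu : v + d • u ∈ R)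
    (hsupp : ∀ z ∈ R, 0 ≤ ⟪z - v, u⟫_ℝ) (hRv : ∀ z ∈ R, dist z v ≤ d) :
    dirWidth (R + closedBall (0 : E2) (1 - d)) u = 2 - d := by
  have hρ : (0:ℝ) ≤ 1 - d := by linarith
  have key : ∀ x ∈ R + closedBall (0:E2) (1-d), ∀ y ∈ R + closedBall (0:E2) (1-d),
      ⟪x - y, u⟫_ℝ ≤ 2 - d := by
    rintro x hx y hy
    obtain ⟨x1, hx1, p, hp, rfl⟩ := hx
    obtain ⟨y1, hy1, q, hq, rfl⟩ := hy
    have h1 : ⟪x1 - v, u⟫_ℝ ≤ d := by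
      calc ⟪x1 - v, u⟫_ℝ ≤ ‖x1 - v‖ * ‖u‖ := real_inner_le_norm _ _
        _ = dist x1 v := by rw [hu, mul_one, dist_eq_norm]
        _ ≤ d := hRv x1 hx1
    have h2 : 0 ≤ ⟪y1 - v, u⟫_ℝ := hsupp y1 hy1
    have h3 : ⟪p - q, u⟫_ℝ ≤ 2*(1-d) := by
      calc ⟪p - q, u⟫_ℝ ≤ ‖p - q‖ * ‖u‖ := real_inner_le_norm _ _
        _ = ‖p - q‖ := by rw [hu, mul_one]
        _ ≤ ‖p‖ + ‖q‖ := norm_sub_le _ _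
        _ ≤ 2*(1-d) := by linarith [norm_le_of_mem_cb hp, norm_le_of_mem_cb hq]
    have hsplit : (x1 + p) - (y1 + q) = ((x1 - v) - (y1 - v)) + (p - q) := by abel
    rw [hsplit, inner_add_left, inner_sub_left]
    linarith
  have hmx : (v + d • u) + (1-d) • u ∈ R + closedBall (0:E2) (1-d) := by
    refine Set.add_mem_add hvu ?_
    simp [mem_closedBall, dist_zero_right, norm_smul, hu, abs_of_nonneg hρ]
  have hmy : v + (-((1-d) • u)) ∈ R + closedBall (0:E2) (1-d) := by
    refine Set.add_mem_add hv ?_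
    simp [mem_closedBall, dist_zero_right, norm_smul, hu, abs_of_nonneg hρ]
  have hinner : ⟪((v + d • u) + (1-d) • u) - (v + (-((1-d) • u))), u⟫_ℝ = 2 - d := by
    have hxy : ((v + d • u) + (1-d) • u) - (v + (-((1-d) • u))) = (2-d) • u := by module
    rw [hxy, real_inner_smul_left, real_inner_self_eq_norm_sq, hu]
    ring
  have hne : (2 - d) ∈ {w : ℝ | ∃ x ∈ R + closedBall (0:E2) (1-d),
      ∃ y ∈ R + closedBall (0:E2) (1-d), w = ⟪x - y, u⟫_ℝ} :=
    ⟨_, hmx, _, hmy, hinner.symm⟩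
  have hbdd : (2 - d) ∈ upperBounds {w : ℝ | ∃ x ∈ R + closedBall (0:E2) (1-d),
      ∃ y ∈ R + closedBall (0:E2) (1-d), w = ⟪x - y, u⟫_ℝ} := by
    rintro w ⟨x, hx, y, hy, rfl⟩
    exact key x hx y hy
  exact le_antisymm (csSup_le ⟨_, hne⟩ hbdd) (le_csSup ⟨_, hbdd⟩ hne)

lemma dirWidth_neg (C : Set E2) (u : E2) : dirWidth C (-u) = dirWidth C u := by
  unfold dirWidth
  congr 1
  ext w
  constructor
  · rintro ⟨x, hx, y, hy, rfl⟩
    exact ⟨y, hy, x, hx, by rw [inner_neg_right, ← inner_neg_left, neg_sub]⟩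
  · rintro ⟨x, hx, y, hy, rfl⟩
    exact ⟨y, hy, x, hx, by rw [← neg_sub x y, inner_neg_left, ← inner_neg_right, neg_neg]⟩

lemma vertexV1 (d : ℝ) (hd1 : 0 < d) (hd2 : d < 1) (u : E2) (hu : ‖u‖ = 1)
    (hc1 : 1/2 ≤ u 0) (hc2 : 1 ≤ u 0 + Real.sqrt 3 * u 1) :
    dirWidth ((closedBall (pt 0 0) d ∩ closedBall (pt d 0) d
        ∩ closedBall (pt (d / 2) (Real.sqrt 3 / 2 * d)) d)
      + closedBall (0 : E2) (1 - d)) u = 2 - d := by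
  set s := Real.sqrt 3 with hsdef
  have hs : s^2 = 3 := Real.sq_sqrt (by norm_num)
  have hs1 : 1 ≤ s := by nlinarith [Real.sqrt_nonneg 3]
  have hd0 : (0:ℝ) ≤ d := hd1.le
  have hu2 : (u 0)^2 + (u 1)^2 = 1 := unit_coords hu
  refine good_vertex d hd2 u hu _ (pt 0 0) ?_ ?_ ?_ ?_
  · refine ⟨⟨?_, ?_⟩, ?_⟩ <;> rw [mem_cb hd0] <;>
      simp only [pt_apply_zero, pt_apply_one] <;> nlinarith [hs, sq_nonneg d]
  · have c0 : (pt 0 0 + d • u) 0 = d * u 0 := by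
      simp [PiLp.add_apply, PiLp.smul_apply, pt_apply_zero, smul_eq_mul]
    have c1 : (pt 0 0 + d • u) 1 = d * u 1 := by
      simp [PiLp.add_apply, PiLp.smul_apply, pt_apply_one, smul_eq_mul]
    refine ⟨⟨?_, ?_⟩, ?_⟩ <;> rw [mem_cb hd0] <;>
      simp only [c0, c1, pt_apply_zero, pt_apply_one]
    · nlinarith [hu2, sq_nonneg d]
    · nlinarith [hu2, mul_nonneg (mul_pos hd1 hd1).le (by linarith : (0:ℝ) ≤ u 0 - 1/2)]
    · nlinarith [hu2, hs, mul_nonneg (mul_pos hd1 hd1).le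
        (by linarith : (0:ℝ) ≤ u 0 + s * u 1 - 1)]
  · rintro z ⟨⟨h1, h2⟩, h3⟩
    rw [mem_cb hd0] at h2 h3
    rw [inner_coords]
    simp only [PiLp.sub_apply, pt_apply_zero, pt_apply_one] at h2 h3 ⊢
    have := keyV1 d s (u 0) (u 1) (z 0) (z 1) hd1 hs hs1 hu2 hc1 hc2
      (by nlinarith [h2]) (by nlinarith [h3])
    nlinarith [this]
  · rintro z ⟨⟨h1, h2⟩, h3⟩
    exact mem_closedBall.1 h1

lemma vertexV2 (d : ℝ) (hd1 : 0 < d) (hd2 : d < 1) (u : E2) (hu : ‖u‖ = 1)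
    (hc1 : 1/2 ≤ -(u 0)) (hc2 : 1 ≤ -(u 0) + Real.sqrt 3 * u 1) :
    dirWidth ((closedBall (pt 0 0) d ∩ closedBall (pt d 0) d
        ∩ closedBall (pt (d / 2) (Real.sqrt 3 / 2 * d)) d)
      + closedBall (0 : E2) (1 - d)) u = 2 - d := by
  set s := Real.sqrt 3 with hsdef
  have hs : s^2 = 3 := Real.sq_sqrt (by norm_num)
  have hs1 : 1 ≤ s := by nlinarith [Real.sqrt_nonneg 3]
  have hd0 : (0:ℝ) ≤ d := hd1.le
  have hu2 : (u 0)^2 + (u 1)^2 = 1 := unit_coords hu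
  refine good_vertex d hd2 u hu _ (pt d 0) ?_ ?_ ?_ ?_
  · refine ⟨⟨?_, ?_⟩, ?_⟩ <;> rw [mem_cb hd0] <;>
      simp only [pt_apply_zero, pt_apply_one] <;> nlinarith [hs, sq_nonneg d]
  · have c0 : (pt d 0 + d • u) 0 = d + d * u 0 := by
      simp [PiLp.add_apply, PiLp.smul_apply, pt_apply_zero, smul_eq_mul]
    have c1 : (pt d 0 + d • u) 1 = d * u 1 := by
      simp [PiLp.add_apply, PiLp.smul_apply, pt_apply_one, smul_eq_mul]
    refine ⟨⟨?_, ?_⟩, ?_⟩ <;> rw [mem_cb hd0] <;>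
      simp only [c0, c1, pt_apply_zero, pt_apply_one]
    · nlinarith [hu2, mul_nonneg (mul_pos hd1 hd1).le (by linarith : (0:ℝ) ≤ -(u 0) - 1/2)]
    · nlinarith [hu2, sq_nonneg d]
    · nlinarith [hu2, hs, mul_nonneg (mul_pos hd1 hd1).le
        (by linarith : (0:ℝ) ≤ -(u 0) + s * u 1 - 1)]
  · rintro z ⟨⟨h1, h2⟩, h3⟩
    rw [mem_cb hd0] at h1 h3
    rw [inner_coords]
    simp only [PiLp.sub_apply, pt_apply_zero, pt_apply_one] at h1 h3 ⊢
    have := keyV2 d s (u 0) (u 1) (z 0) (z 1) hd1 hs hs1 hu2 hc1 hc2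
      (by nlinarith [h1]) (by nlinarith [h3])
    nlinarith [this]
  · rintro z ⟨⟨h1, h2⟩, h3⟩
    exact mem_closedBall.1 h2

lemma vertexV3 (d : ℝ) (hd1 : 0 < d) (hd2 : d < 1) (u : E2) (hu : ‖u‖ = 1)
    (hc1 : 1 ≤ -(u 0) - Real.sqrt 3 * u 1) (hc2 : 1 ≤ u 0 - Real.sqrt 3 * u 1) :
    dirWidth ((closedBall (pt 0 0) d ∩ closedBall (pt d 0) d
        ∩ closedBall (pt (d / 2) (Real.sqrt 3 / 2 * d)) d)
      + closedBall (0 : E2) (1 - d)) u = 2 - d := by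
  set s := Real.sqrt 3 with hsdef
  have hs : s^2 = 3 := Real.sq_sqrt (by norm_num)
  have hs1 : 1 ≤ s := by nlinarith [Real.sqrt_nonneg 3]
  have hd0 : (0:ℝ) ≤ d := hd1.le
  have hu2 : (u 0)^2 + (u 1)^2 = 1 := unit_coords hu
  refine good_vertex d hd2 u hu _ (pt (d / 2) (Real.sqrt 3 / 2 * d)) ?_ ?_ ?_ ?_
  · refine ⟨⟨?_, ?_⟩, ?_⟩ <;> rw [mem_cb hd0] <;>
      simp only [pt_apply_zero, pt_apply_one] <;> nlinarith [hs, sq_nonneg d]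
  · have c0 : (pt (d / 2) (Real.sqrt 3 / 2 * d) + d • u) 0 = d / 2 + d * u 0 := by
      simp [PiLp.add_apply, PiLp.smul_apply, pt_apply_zero, smul_eq_mul]
    have c1 : (pt (d / 2) (Real.sqrt 3 / 2 * d) + d • u) 1 = s / 2 * d + d * u 1 := by
      simp [PiLp.add_apply, PiLp.smul_apply, pt_apply_one, smul_eq_mul, hsdef]
    refine ⟨⟨?_, ?_⟩, ?_⟩ <;> rw [mem_cb hd0] <;>
      simp only [c0, c1, pt_apply_zero, pt_apply_one]
    · nlinarith [hu2, hs, mul_nonneg (mul_pos hd1 hd1).le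
        (by linarith : (0:ℝ) ≤ -(u 0) - s * u 1 - 1)]
    · nlinarith [hu2, hs, mul_nonneg (mul_pos hd1 hd1).le
        (by linarith : (0:ℝ) ≤ u 0 - s * u 1 - 1)]
    · nlinarith [hu2, sq_nonneg d]
  · rintro z ⟨⟨h1, h2⟩, h3⟩
    rw [mem_cb hd0] at h1 h2
    rw [inner_coords]
    simp only [PiLp.sub_apply, pt_apply_zero, pt_apply_one] at h1 h2 ⊢
    have := keyV3 d s (u 0) (u 1) (z 0) (z 1) hd1 hs hs1 hu2 hc1 hc2
      (by nlinarith [h1]) (by nlinarith [h2])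
    nlinarith [this]
  · rintro z ⟨⟨h1, h2⟩, h3⟩
    exact mem_closedBall.1 h3


/-- The outer parallel domain of radius `1 - d` of a Reuleaux triangle of width
`d` is a convex domain of constant width `2 - d`. -/
theorem outer_parallel_reuleaux_constant_width (d : ℝ) (hd1 : 0 < d) (hd2 : d < 1) :
    ∀ u : E2, ‖u‖ = 1 →
      dirWidth ((closedBall (pt 0 0) d ∩ closedBall (pt d 0) d
            ∩ closedBall (pt (d / 2) (Real.sqrt 3 / 2 * d)) d)
          + closedBall (0 : E2) (1 - d)) u = 2 - d := by
  intro u hu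
  have hs : (Real.sqrt 3)^2 = 3 := Real.sq_sqrt (by norm_num)
  have hs1 : 1 ≤ Real.sqrt 3 := by nlinarith [Real.sqrt_nonneg 3]
  have hu2 : (u 0)^2 + (u 1)^2 = 1 := unit_coords hu
  have hnu : ‖-u‖ = 1 := by rw [norm_neg]; exact hu
  have hn0 : (-u) 0 = -(u 0) := rfl
  have hn1 : (-u) 1 = -(u 1) := rfl
  rcases cases_lemma (Real.sqrt 3) (u 0) (u 1) hs hs1 hu2 with
    ⟨h1, h2⟩ | ⟨h1, h2⟩ | ⟨h1, h2⟩ | ⟨h1, h2⟩ | ⟨h1, h2⟩ | ⟨h1, h2⟩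
  · exact vertexV1 d hd1 hd2 u hu h1 h2
  · exact vertexV2 d hd1 hd2 u hu h1 h2
  · exact vertexV3 d hd1 hd2 u hu h1 h2
  · rw [← dirWidth_neg]
    exact vertexV1 d hd1 hd2 (-u) hnu (by rw [hn0]; linarith)
      (by rw [hn0, hn1]; linarith)
  · rw [← dirWidth_neg]
    exact vertexV2 d hd1 hd2 (-u) hnu (by rw [hn0]; linarith)
      (by rw [hn0, hn1]; linarith)
  · rw [← dirWidth_neg]
    exact vertexV3 d hd1 hd2 (-u) hnu (by rw [hn0, hn1]; linarith)
      (by rw [hn0, hn1]; linarith)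
end
end
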